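/- Necklace bracket formula for the first bracket: let n ≥ 1, let r, s ≥ 1, and let a₁,…,a_r and b₁,…,b_s be words in which each letter is one of the two symbols A, B. Define F₁(A,B) = tr(a₁⋯a_r) and F₂(A,B) = tr(b₁⋯b_s) by substituting the matrices A, B for the symbols. For each i let c_i = a_{i+1}⋯a_r a₁⋯a_{i−1} and for each j let d_j = b_{j+1}⋯b_s b₁⋯b_{j−1} (the products of the remaining letters in cyclic order, again with A, B substituted). Then {F₁,F₂}_0 = Σ_{(i,j): a_i = B, b_j = A} tr(c_i d_j) − Σ_{(i,j): a_i = A, b_j = B} tr(d_j c_i) identically on Mat_n(ℝ) × Mat_n(ℝ). -/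

import Mathlib

/- STATEMENT 5: necklace bracket formula for the first bracket. For words
a₁⋯a_r and b₁⋯b_s in the two letters A, B (a letter is encoded as a `Bool`:
`true` stands for the symbol A and `false` for the symbol B), define
F₁(A,B) = tr(a₁⋯a_r), F₂(A,B) = tr(b₁⋯b_s); then
{F₁,F₂}_0 = Σ_{(i,j): a_i = B, b_j = A} tr(c_i d_j)
          − Σ_{(i,j): a_i = A, b_j = B} tr(d_j c_i),
where c_i = a_{i+1}⋯a_r a₁⋯a_{i−1} and d_j = b_{j+1}⋯b_s b₁⋯b_{j−1}. -/

attribute [local instance] Matrix.frobeniusNormedAddCommGroup Matrix.frobeniusNormedSpace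

/-- The space of real n×n matrices. -/
abbrev Mat (n : ℕ) := Matrix (Fin n) (Fin n) ℝ

/-- The first component ξ_F of the gradient of F : Mat_n × Mat_n → ℝ,
characterized by dF_{(A,B)}(V,W) = tr(ξ_F V) + tr(η_F W); encoded via the
Fréchet derivative as (ξ_F)_{ij} = dF(E_{ji}, 0), since tr(ξ E_{ji}) = ξ_{ij}. -/
noncomputable def gradA {n : ℕ} (F : Mat n × Mat n → ℝ) (p : Mat n × Mat n) : Mat n :=
  Matrix.of fun i j => fderiv ℝ F p (Matrix.single j i 1, 0)

/-- The second component η_F of the gradient of F : Mat_n × Mat_n → ℝ. -/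
noncomputable def gradB {n : ℕ} (F : Mat n × Mat n → ℝ) (p : Mat n × Mat n) : Mat n :=
  Matrix.of fun i j => fderiv ℝ F p (0, Matrix.single j i 1)

/-- The first Poisson (canonical) bracket {F,G}_0(A,B) = tr(η_F ξ_G − ξ_F η_G). -/
noncomputable def bracket0 {n : ℕ} (F G : Mat n × Mat n → ℝ) (p : Mat n × Mat n) : ℝ :=
  Matrix.trace (gradB F p * gradA G p - gradA F p * gradB G p)

/-- Substitute the matrices A, B for the symbols: `true` ↦ A, `false` ↦ B. -/
def subst {n : ℕ} (A B : Mat n) : Bool → Mat n := fun s => if s then A else B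

/-- The (ordered) product of the word w with A, B substituted for the symbols. -/
def wordProd {n : ℕ} (A B : Mat n) (w : List Bool) : Mat n := (w.map (subst A B)).prod

/-- The word of the remaining letters in cyclic order after removing the letter
at (0-based) position i: a_{i+1}⋯a_r a₁⋯a_{i−1}. -/
def cyc (w : List Bool) (i : ℕ) : List Bool := w.drop (i + 1) ++ w.take i

/-- The trace function F(A,B) = tr(w₁⋯w_r) associated to a word w. -/
def traceWord (n : ℕ) (w : List Bool) : Mat n × Mat n → ℝ :=
  fun p => Matrix.trace (wordProd p.1 p.2 w)

attribute [local instance 50] Matrix.frobeniusNormedRing Matrix.frobeniusNormedAlgebra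

noncomputable def subL (n : ℕ) (s : Bool) : Mat n × Mat n →L[ℝ] Mat n :=
  if s then ContinuousLinearMap.fst ℝ _ _ else ContinuousLinearMap.snd ℝ _ _

noncomputable def Lw (n : ℕ) (w : List Bool) (p : Mat n × Mat n) : Mat n × Mat n →L[ℝ] Mat n :=
  ∑ i : Fin w.length,
    (ContinuousLinearMap.mul ℝ (Mat n) (wordProd p.1 p.2 (w.take i))).comp
      (((ContinuousLinearMap.mul ℝ (Mat n)).flip (wordProd p.1 p.2 (w.drop (i+1)))).comp
        (subL n (w.get i)))

lemma Lw_apply (n : ℕ) (w : List Bool) (p : Mat n × Mat n) (V W : Mat n) :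
    Lw n w p (V, W) = ∑ i : Fin w.length,
      wordProd p.1 p.2 (w.take i) *
        ((if w.get i then V else W) * wordProd p.1 p.2 (w.drop (i+1))) := by
  unfold Lw
  erw [ContinuousLinearMap.sum_apply]
  refine Finset.sum_congr rfl fun i _ => ?_
  unfold subL
  cases h : w.get i <;> rfl

lemma wordProd_nil {n : ℕ} (A B : Mat n) : wordProd A B [] = 1 := by simp [wordProd]

lemma wordProd_cons {n : ℕ} (A B : Mat n) (s : Bool) (t : List Bool) :
    wordProd A B (s :: t) = subst A B s * wordProd A B t := by
  simp [wordProd]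

lemma hasFDerivAt_wordProd (n : ℕ) (w : List Bool) (p : Mat n × Mat n) :
    HasFDerivAt (fun q : Mat n × Mat n => wordProd q.1 q.2 w) (Lw n w p) p := by
  induction w generalizing p with
  | nil =>
      have h0 : Lw n [] p = 0 := by
        apply ContinuousLinearMap.ext; intro x; simp [Lw]; rfl
      rw [h0]
      simpa [wordProd] using hasFDerivAt_const (1 : Mat n) p
  | cons s t ih =>
      have hf : HasFDerivAt (fun q : Mat n × Mat n => subst q.1 q.2 s) (subL n s) p := by
        cases s
        · exact hasFDerivAt_snd (p := p) (𝕜 := ℝ)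
        · exact hasFDerivAt_fst (p := p) (𝕜 := ℝ)
      have h : HasFDerivAt (fun q : Mat n × Mat n => subst q.1 q.2 s * wordProd q.1 q.2 t) _ p :=
        hf.mul' (ih p)
      have heq : (fun q : Mat n × Mat n => subst q.1 q.2 s * wordProd q.1 q.2 t)
          = fun q : Mat n × Mat n => wordProd q.1 q.2 (s :: t) := by
        funext q; rw [wordProd_cons]
      rw [heq] at h
      refine h.congr_fderiv ?_
      apply ContinuousLinearMap.ext; rintro ⟨V, W⟩
      erw [ContinuousLinearMap.add_apply, ContinuousLinearMap.smul_apply, ContinuousLinearMap.smul_apply]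
      erw [Lw_apply, Lw_apply]
      simp only [ContinuousLinearMap.add_apply, ContinuousLinearMap.smul_apply, smul_eq_mul,
        ContinuousLinearMap.smulRight_apply, Lw_apply, List.length_cons]
      rw [Fin.sum_univ_succ]
      simp only [List.get_eq_getElem, List.getElem_cons_zero, List.getElem_cons_succ,
        Fin.val_zero, Fin.val_succ, List.take_zero, List.take_succ_cons, List.drop_succ_cons,
        wordProd_nil, wordProd_cons, one_mul, Finset.mul_sum, MulOpposite.smul_eq_mul_unop,
        MulOpposite.unop_op]
      have hsub : ∀ V W : Mat n, (subL n s) (V, W) = if s then V else W := by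
        intro V W; cases s <;> simp [subL]
      erw [hsub]
      cases s <;> ring_nf <;> simp [mul_assoc, add_comm, subst]

noncomputable def traceCLM (n : ℕ) : Mat n →L[ℝ] ℝ :=
  LinearMap.toContinuousLinearMap (Matrix.traceLinearMap (Fin n) ℝ ℝ)

lemma hasFDerivAt_traceWord (n : ℕ) (w : List Bool) (p : Mat n × Mat n) :
    HasFDerivAt (traceWord n w) ((traceCLM n).comp (Lw n w p)) p := by
  have h := (traceCLM n).hasFDerivAt.comp p (hasFDerivAt_wordProd n w p)
  exact h

lemma wordProd_cyc {n : ℕ} (A B : Mat n) (w : List Bool) (i : ℕ) :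
    wordProd A B (cyc w i) = wordProd A B (w.drop (i+1)) * wordProd A B (w.take i) := by
  simp [wordProd, cyc]

lemma traceE {n : ℕ} (i j : Fin n) (M : Mat n) :
    Matrix.trace (Matrix.single j i 1 * M) = M i j := by
  simp [Matrix.trace, Matrix.diag, Matrix.mul_apply, Matrix.single, Matrix.of_apply,
    Finset.sum_ite_eq, ite_and]

lemma gradA_traceWord (n : ℕ) (w : List Bool) (p : Mat n × Mat n) :
    gradA (traceWord n w) p
      = ∑ i : Fin w.length, if w.get i then wordProd p.1 p.2 (cyc w i) else 0 := by
  ext i j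
  show fderiv ℝ (traceWord n w) p (Matrix.single j i 1, 0) = _
  rw [(hasFDerivAt_traceWord n w p).fderiv]
  simp only [ContinuousLinearMap.comp_apply, Lw_apply]
  have ht : (traceCLM n) (∑ k : Fin w.length, wordProd p.1 p.2 (w.take k) *
      ((if w.get k then Matrix.single j i 1 else 0) * wordProd p.1 p.2 (w.drop (k+1))))
      = ∑ k : Fin w.length, Matrix.trace (wordProd p.1 p.2 (w.take k) *
      ((if w.get k then Matrix.single j i 1 else 0) * wordProd p.1 p.2 (w.drop (k+1)))) := by
    simp [traceCLM, Matrix.trace_sum]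
  rw [ht, Matrix.sum_apply]
  refine Finset.sum_congr rfl fun k _ => ?_
  simp only [List.get_eq_getElem] at *
  by_cases h : w[(k : ℕ)] = true
  · simp only [h, if_true]
    rw [Matrix.trace_mul_comm, Matrix.mul_assoc, traceE, ← wordProd_cyc]
  · simp [h]

lemma gradB_traceWord (n : ℕ) (w : List Bool) (p : Mat n × Mat n) :
    gradB (traceWord n w) p
      = ∑ i : Fin w.length, if w.get i then 0 else wordProd p.1 p.2 (cyc w i) := by
  ext i j
  show fderiv ℝ (traceWord n w) p (0, Matrix.single j i 1) = _
  rw [(hasFDerivAt_traceWord n w p).fderiv]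
  simp only [ContinuousLinearMap.comp_apply, Lw_apply]
  have ht : (traceCLM n) (∑ k : Fin w.length, wordProd p.1 p.2 (w.take k) *
      ((if w.get k then 0 else Matrix.single j i 1) * wordProd p.1 p.2 (w.drop (k+1))))
      = ∑ k : Fin w.length, Matrix.trace (wordProd p.1 p.2 (w.take k) *
      ((if w.get k then 0 else Matrix.single j i 1) * wordProd p.1 p.2 (w.drop (k+1)))) := by
    simp [traceCLM, Matrix.trace_sum]
  rw [ht, Matrix.sum_apply]
  refine Finset.sum_congr rfl fun k _ => ?_
  simp only [List.get_eq_getElem] at *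
  by_cases h : w[(k : ℕ)] = true
  · simp [h]
  · simp only [h, Bool.false_eq_true, if_false]
    rw [Matrix.trace_mul_comm, Matrix.mul_assoc, traceE, ← wordProd_cyc]


theorem necklace_formula_bracket0 (n : ℕ) (hn : 1 ≤ n)
    (a b : List Bool) (ha : 1 ≤ a.length) (hb : 1 ≤ b.length) (A B : Mat n) :
    bracket0 (traceWord n a) (traceWord n b) (A, B) =
      (∑ i : Fin a.length, ∑ j : Fin b.length,
        if a.get i = false ∧ b.get j = true then
          Matrix.trace (wordProd A B (cyc a i) * wordProd A B (cyc b j)) else 0)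
      - (∑ i : Fin a.length, ∑ j : Fin b.length,
        if a.get i = true ∧ b.get j = false then
          Matrix.trace (wordProd A B (cyc b j) * wordProd A B (cyc a i)) else 0) := by
  rw [bracket0, Matrix.trace_sub]
  rw [gradB_traceWord, gradA_traceWord, gradA_traceWord, gradB_traceWord]
  refine congrArg₂ (· - ·) ?_ ?_
  · rw [Finset.sum_mul_sum, Matrix.trace_sum]
    refine Finset.sum_congr rfl fun k _ => ?_
    rw [Matrix.trace_sum]
    refine Finset.sum_congr rfl fun l _ => ?_
    cases hk : a.get k <;> cases hl : b.get l <;> simp [hk, hl]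
  · rw [Finset.sum_mul_sum, Matrix.trace_sum]
    refine Finset.sum_congr rfl fun k _ => ?_
    rw [Matrix.trace_sum]
    refine Finset.sum_congr rfl fun l _ => ?_
    cases hk : a.get k <;> cases hl : b.get l <;> simp [hk, hl]
    exact Matrix.trace_mul_comm _ _
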